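/- For the (2,2)-periodic Schrödinger symbol: with potentials c₁₁ = −c₂₂ = c₁ > 0, c₁₂ = −c₂₁ = c₂ > 0, the determinant det(S(x₁,x₂) − λI₄) equals (λ²−c₁²)(λ²−c₂²) + 2β(λ² − c₁c₂) + β² − 4λ²|τ(x₂)|², where β = |τ(x₂)|² − |τ(x₁)|² and τ(x) = 1 + e^{ix}. -/

import Mathlib

open Matrix

noncomputable section

/-- `τ(x) = 1 + e^{ix}`. -/
def tau (x : ℝ) : ℂ := 1 + Complex.exp (x * Complex.I)

/-- The symbol of the (2,2)-periodic discrete Schrödinger operator with potential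
`c₁₁ = −c₂₂ = c₁`, `c₁₂ = −c₂₁ = c₂`. -/
def symb2 (c₁ c₂ x₁ x₂ : ℝ) : Matrix (Fin 2 ⊕ Fin 2) (Fin 2 ⊕ Fin 2) ℂ :=
  Matrix.fromBlocks
    !![(c₁ : ℂ), tau x₂; tau (-x₂), (c₂ : ℂ)]
    (tau x₁ • (1 : Matrix (Fin 2) (Fin 2) ℂ))
    (tau (-x₁) • (1 : Matrix (Fin 2) (Fin 2) ℂ))
    !![(-c₂ : ℂ), tau x₂; tau (-x₂), (-c₁ : ℂ)]

lemma tau_neg (x : ℝ) : tau (-x) = starRingEnd ℂ (tau x) := by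
  simp [tau, ← Complex.exp_conj, Complex.conj_I]

lemma tau_mul (x : ℝ) : tau x * tau (-x) = ((‖tau x‖) ^ 2 : ℝ) := by
  rw [tau_neg, Complex.mul_conj, Complex.sq_norm]

lemma det4 (t₁ t₁' t₂ t₂' c₁ c₂ lam : ℂ) :
    (!![c₁ - lam, t₂, t₁, 0;
        t₂', c₂ - lam, 0, t₁;
        t₁', 0, -c₂ - lam, t₂;
        0, t₁', t₂', -c₁ - lam] : Matrix (Fin 4) (Fin 4) ℂ).det =
      (lam ^ 2 - c₁ ^ 2) * (lam ^ 2 - c₂ ^ 2) +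
        2 * (t₂ * t₂' - t₁ * t₁') * (lam ^ 2 - c₁ * c₂) +
        (t₂ * t₂' - t₁ * t₁') ^ 2 - 4 * lam ^ 2 * (t₂ * t₂') := by
  simp [Matrix.det_succ_row_zero, Fin.sum_univ_succ, Fin.succAbove]
  ring

lemma fse0 : finSumFinEquiv.symm (0 : Fin 4) = (Sum.inl 0 : Fin 2 ⊕ Fin 2) := rfl
lemma fse1 : finSumFinEquiv.symm (1 : Fin 4) = (Sum.inl 1 : Fin 2 ⊕ Fin 2) := rfl
lemma fse2 : finSumFinEquiv.symm (2 : Fin 4) = (Sum.inr 0 : Fin 2 ⊕ Fin 2) := rfl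
lemma fse3 : finSumFinEquiv.symm (3 : Fin 4) = (Sum.inr 1 : Fin 2 ⊕ Fin 2) := rfl

/-- `det(S − λI) = (λ²−c₁²)(λ²−c₂²) + 2β(λ² − c₁c₂) + β² − 4λ²|τ(x₂)|²` with
`β = |τ(x₂)|² − |τ(x₁)|²`. -/
theorem det_symb2 (c₁ c₂ : ℝ) (hc₁ : 0 < c₁) (hc₂ : 0 < c₂) (x₁ x₂ lam : ℝ) :
    (symb2 c₁ c₂ x₁ x₂ -
        (lam : ℂ) • (1 : Matrix (Fin 2 ⊕ Fin 2) (Fin 2 ⊕ Fin 2) ℂ)).det =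
      (((lam ^ 2 - c₁ ^ 2) * (lam ^ 2 - c₂ ^ 2) +
          2 * (‖tau x₂‖ ^ 2 - ‖tau x₁‖ ^ 2) *
            (lam ^ 2 - c₁ * c₂) +
          (‖tau x₂‖ ^ 2 - ‖tau x₁‖ ^ 2) ^ 2 -
          4 * lam ^ 2 * ‖tau x₂‖ ^ 2 : ℝ) : ℂ) := by
  have hre : (symb2 c₁ c₂ x₁ x₂ -
        (lam : ℂ) • (1 : Matrix (Fin 2 ⊕ Fin 2) (Fin 2 ⊕ Fin 2) ℂ)).det =
      (!![(c₁ : ℂ) - lam, tau x₂, tau x₁, 0;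
          tau (-x₂), (c₂ : ℂ) - lam, 0, tau x₁;
          tau (-x₁), 0, -(c₂ : ℂ) - lam, tau x₂;
          0, tau (-x₁), tau (-x₂), -(c₁ : ℂ) - lam] : Matrix (Fin 4) (Fin 4) ℂ).det := by
    rw [← Matrix.det_reindex_self finSumFinEquiv
      (symb2 c₁ c₂ x₁ x₂ - (lam : ℂ) • (1 : Matrix (Fin 2 ⊕ Fin 2) (Fin 2 ⊕ Fin 2) ℂ))]
    congr 1
    ext i j
    fin_cases i <;> fin_cases j <;>
      simp [symb2, Matrix.fromBlocks, Matrix.one_apply, Matrix.smul_apply,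
        fse0, fse1, fse2, fse3, Matrix.sub_apply]
  rw [hre, det4]
  rw [tau_mul, tau_mul]
  push_cast
  ring
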